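/- Fix nonnegative integers m, n and a positive integer k with k ≤ n+1. The generating function, by total weight |α|+|β|, over pairs (α,β) where α is a strictly decreasing sequence of integers in [1,m], β is a strictly decreasing sequence of integers in [0,n], and length(β) − length(α) = k, equals q^{binom(k,2)} · [m+n+1 choose n−k+1]_q. -/

import Mathlib

open Finset

/-- The q-shifted factorial `(q;q)_r = ∏_{i=1}^r (1 - q^i)` in `ℚ(q)`. -/
noncomputable def qPoch (r : ℕ) : RatFunc ℚ :=
  ∏ i ∈ Finset.range r, (1 - (RatFunc.X : RatFunc ℚ) ^ (i + 1))

/-- The Gaussian binomial coefficient `[a choose b]_q`, zero outside `0 ≤ b ≤ a`. -/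
noncomputable def qbinom (a : ℕ) (b : ℤ) : RatFunc ℚ :=
  if 0 ≤ b ∧ b ≤ (a : ℤ) then qPoch a / (qPoch b.toNat * qPoch (a - b.toNat)) else 0

lemma qPoch_succ (r : ℕ) : qPoch (r + 1) = qPoch r * (1 - (RatFunc.X : RatFunc ℚ) ^ (r + 1)) :=
  Finset.prod_range_succ _ _

lemma one_sub_X_pow_ne_zero (j : ℕ) : (1 - (RatFunc.X : RatFunc ℚ) ^ (j + 1)) ≠ 0 := by
  have h : (1 - (RatFunc.X : RatFunc ℚ) ^ (j + 1)) =
      algebraMap (Polynomial ℚ) (RatFunc ℚ) (1 - Polynomial.X ^ (j + 1)) := by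
    simp [map_sub, map_pow, RatFunc.algebraMap_X]
  rw [h]
  apply RatFunc.algebraMap_ne_zero
  intro hp
  have := congrArg (fun p => Polynomial.coeff p 0) hp
  simp [Polynomial.coeff_X_pow] at this

lemma qPoch_ne_zero (r : ℕ) : qPoch r ≠ 0 := by
  unfold qPoch
  exact Finset.prod_ne_zero_iff.mpr fun i _ => one_sub_X_pow_ne_zero i

noncomputable def Gq (N b : ℕ) : RatFunc ℚ :=
  ∑ S ∈ (Finset.range N).powersetCard b, (RatFunc.X : RatFunc ℚ) ^ (S.sum id)

lemma Gq_zero (N : ℕ) : Gq N 0 = 1 := by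
  simp [Gq, Finset.powersetCard_zero]

lemma Gq_of_lt {N b : ℕ} (h : N < b) : Gq N b = 0 := by
  rw [Gq, Finset.powersetCard_eq_empty.mpr (by simpa using h), Finset.sum_empty]

lemma Gq_succ (N b : ℕ) : Gq (N + 1) (b + 1) =
    Gq N (b + 1) + (RatFunc.X : RatFunc ℚ) ^ N * Gq N b := by
  have hN : N ∉ Finset.range N := by simp
  rw [Gq, Finset.range_add_one, Finset.powersetCard_succ_insert hN]
  have hdisj : Disjoint ((Finset.range N).powersetCard (b + 1))
      (((Finset.range N).powersetCard b).image (insert N)) := by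
    rw [Finset.disjoint_left]
    intro S hS hS'
    obtain ⟨T, hT, rfl⟩ := Finset.mem_image.mp hS'
    have h1 : insert N T ⊆ Finset.range N := (Finset.mem_powersetCard.mp hS).1
    exact hN (h1 (Finset.mem_insert_self _ _))
  rw [Finset.sum_union hdisj]
  congr 1
  have hinj : ∀ S ∈ (Finset.range N).powersetCard b, ∀ T ∈ (Finset.range N).powersetCard b,
      insert N S = insert N T → S = T := by
    intro S hS T hT h
    have hNS : N ∉ S := fun h => hN ((Finset.mem_powersetCard.mp hS).1 h)
    have hNT : N ∉ T := fun h => hN ((Finset.mem_powersetCard.mp hT).1 h)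
    rw [← Finset.erase_insert hNS, ← Finset.erase_insert hNT, h]
  rw [Finset.sum_image hinj, Gq, Finset.mul_sum]
  apply Finset.sum_congr rfl
  intro S hS
  have hNS : N ∉ S := fun h => hN ((Finset.mem_powersetCard.mp hS).1 h)
  rw [Finset.sum_insert hNS, pow_add]
  rfl

lemma Gq_eq : ∀ N b, b ≤ N →
    Gq N b * (qPoch b * qPoch (N - b)) =
      (RatFunc.X : RatFunc ℚ) ^ (∑ i ∈ Finset.range b, i) * qPoch N := by
  intro N
  induction N with
  | zero =>
    intro b hb
    interval_cases b
    simp [Gq_zero, qPoch]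
  | succ N ih =>
    intro b hb
    match b with
    | 0 => simp [Gq_zero, qPoch]
    | b + 1 =>
      rw [Gq_succ]
      rcases Nat.lt_or_ge b N with h | h
      · -- generic case : b + 1 ≤ N
        have IH1 := ih (b + 1) h
        have IH2 := ih b (by omega)
        obtain ⟨d, rfl⟩ : ∃ d, N = b + 1 + d := ⟨N - (b + 1), by omega⟩
        rw [show b + 1 + d - (b + 1) = d from by omega] at IH1
        rw [show b + 1 + d - b = d + 1 from by omega] at IH2
        rw [show b + 1 + d + 1 - (b + 1) = d + 1 from by omega]
        rw [Finset.sum_range_succ] at IH1 ⊢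
        rw [show qPoch (b + 1 + d + 1) = qPoch (b + 1 + d) * (1 - RatFunc.X ^ (b + 1 + d + 1))
            from qPoch_succ _]
        rw [qPoch_succ b] at IH1 ⊢
        rw [qPoch_succ d] at IH2 ⊢
        linear_combination (1 - (RatFunc.X : RatFunc ℚ) ^ (d + 1)) * IH1 +
          ((RatFunc.X : RatFunc ℚ) ^ (b + 1 + d) * (1 - (RatFunc.X : RatFunc ℚ) ^ (b + 1))) * IH2
      · -- top case : b = N
        have hbN : b = N := by omega
        subst hbN
        have IH := ih b le_rfl
        rw [Nat.sub_self, show qPoch 0 = 1 from by simp [qPoch], mul_one] at IH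
        have hGbb : Gq b b = (RatFunc.X : RatFunc ℚ) ^ (∑ i ∈ Finset.range b, i) :=
          mul_right_cancel₀ (qPoch_ne_zero b) (by rw [IH])
        rw [Gq_of_lt (by omega), hGbb, Nat.sub_self,
          show qPoch 0 = 1 from by simp [qPoch], Finset.sum_range_succ]
        rw [qPoch_succ b] at *
        ring

lemma sync_bij (m n k b : ℕ) (hk1 : 1 ≤ k) (hb : b + k = n + 1) :
    (RatFunc.X : RatFunc ℚ) ^ (n * b) *
      ∑ P ∈ ((Finset.Icc 1 m).powerset ×ˢ (Finset.Icc 0 n).powerset).filter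
        (fun P => P.2.card = P.1.card + k),
      (RatFunc.X : RatFunc ℚ) ^ (P.1.sum id + P.2.sum id) =
    (RatFunc.X : RatFunc ℚ) ^ (∑ i ∈ Finset.range (n + 1), i) * Gq (m + n + 1) b := by
  rw [Finset.mul_sum, Gq, Finset.mul_sum]
  simp only [← pow_add]
  refine Finset.sum_nbij'
    (fun P => P.1.image (· + n) ∪ (Finset.Icc 0 n \ P.2).image (fun x => n - x))
    (fun S => ((S.filter (fun s => n < s)).image (fun s => s - n),
               (Finset.Icc 0 n).filter (fun x => n - x ∉ S))) ?_ ?_ ?_ ?_ ?_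
  · -- maps into powersetCard
    rintro ⟨A, B⟩ hP
    rw [Finset.mem_filter, Finset.mem_product] at hP
    obtain ⟨⟨hA, hB⟩, hcard⟩ := hP
    rw [Finset.mem_powerset] at hA hB
    replace hA : A ⊆ Finset.Icc 1 m := hA
    replace hB : B ⊆ Finset.Icc 0 n := hB
    replace hcard : B.card = A.card + k := hcard
    rw [Finset.mem_powersetCard]
    constructor
    · intro y hy
      rcases Finset.mem_union.mp hy with hy | hy
      · obtain ⟨a, ha, rfl⟩ := Finset.mem_image.mp hy
        have := Finset.mem_Icc.mp (hA ha)
        simp only [Finset.mem_range]; omega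
      · obtain ⟨x, hx, rfl⟩ := Finset.mem_image.mp hy
        simp only [Finset.mem_range]; omega
    · have hdisj : Disjoint (A.image (· + n)) ((Finset.Icc 0 n \ B).image (fun x => n - x)) := by
        rw [Finset.disjoint_left]
        rintro y hy hy'
        obtain ⟨a, ha, rfl⟩ := Finset.mem_image.mp hy
        obtain ⟨x, hx, hxy⟩ := Finset.mem_image.mp hy'
        have hxy' : n - x = a + n := hxy
        have := Finset.mem_Icc.mp (hA ha)
        omega
      rw [Finset.card_union_of_disjoint hdisj,
        Finset.card_image_of_injective _ (fun x y h => by have h' : x + n = y + n := h; omega : Function.Injective (· + n)),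
        Finset.card_image_of_injOn (fun x hx y hy h => by
          have h' : n - x = n - y := h
          have hx' := Finset.mem_Icc.mp (Finset.mem_sdiff.mp hx).1
          have hy' := Finset.mem_Icc.mp (Finset.mem_sdiff.mp hy).1
          omega),
        Finset.card_sdiff_of_subset hB, Nat.card_Icc]
      have hBle : B.card ≤ n + 1 := by
        have := Finset.card_le_card hB
        rwa [Nat.card_Icc] at this
      omega
  · -- inverse maps into domain
    intro S hS
    rw [Finset.mem_powersetCard] at hS
    obtain ⟨hSsub, hScard⟩ := hS
    rw [Finset.mem_filter, Finset.mem_product]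
    have hSr : ∀ s ∈ S, s < m + n + 1 := fun s hs => Finset.mem_range.mp (hSsub hs)
    refine ⟨⟨?_, ?_⟩, ?_⟩
    · rw [Finset.mem_powerset]
      intro y hy
      obtain ⟨s, hs, rfl⟩ := Finset.mem_image.mp hy
      obtain ⟨hs1, hs2⟩ := Finset.mem_filter.mp hs
      have := hSr s hs1
      rw [Finset.mem_Icc]; omega
    · rw [Finset.mem_powerset]
      exact Finset.filter_subset _ _
    · simp only
      have h1 : ((S.filter (fun s => n < s)).image (fun s => s - n)).card
          = (S.filter (fun s => n < s)).card := by
        apply Finset.card_image_of_injOn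
        intro x hx y hy h
        have hx' := (Finset.mem_filter.mp hx).2
        have hy' := (Finset.mem_filter.mp hy).2
        have h' : x - n = y - n := h
        omega
      have h2 : ((Finset.Icc 0 n).filter (fun x => n - x ∈ S)).card
          + ((Finset.Icc 0 n).filter (fun x => n - x ∉ S)).card = n + 1 := by
        rw [Finset.card_filter_add_card_filter_not, Nat.card_Icc]
        omega
      have h3 : ((Finset.Icc 0 n).filter (fun x => n - x ∈ S)).card
          = (S.filter (fun s => s ≤ n)).card := by
        apply Finset.card_nbij' (fun x => n - x) (fun s => n - s)
        · intro x hx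
          obtain ⟨hx1, hx2⟩ := Finset.mem_filter.mp hx
          rw [Finset.mem_Icc] at hx1
          dsimp only; rw [Finset.mem_coe, Finset.mem_filter]
          exact ⟨hx2, by omega⟩
        · intro s hs
          obtain ⟨hs1, hs2⟩ := Finset.mem_filter.mp hs
          dsimp only; rw [Finset.mem_coe, Finset.mem_filter, Finset.mem_Icc]
          rw [show n - (n - s) = s from by omega]
          exact ⟨⟨by omega, by omega⟩, hs1⟩
        · intro x hx
          obtain ⟨hx1, _⟩ := Finset.mem_filter.mp hx
          rw [Finset.mem_Icc] at hx1
          dsimp only; omega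
        · intro s hs
          obtain ⟨_, hs2⟩ := Finset.mem_filter.mp hs
          dsimp only; omega
      have h4 : (S.filter (fun s => n < s)).card + (S.filter (fun s => s ≤ n)).card = b := by
        rw [show (S.filter (fun s => s ≤ n)) = (S.filter (fun s => ¬ n < s)) from
          Finset.filter_congr (fun s _ => by omega), Finset.card_filter_add_card_filter_not,
          hScard]
      omega
  · -- left inverse
    rintro ⟨A, B⟩ hP
    rw [Finset.mem_filter, Finset.mem_product] at hP
    obtain ⟨⟨hA, hB⟩, hcard⟩ := hP
    rw [Finset.mem_powerset] at hA hB
    replace hA : A ⊆ Finset.Icc 1 m := hA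
    replace hB : B ⊆ Finset.Icc 0 n := hB
    replace hcard : B.card = A.card + k := hcard
    simp only [Prod.mk.injEq]
    constructor
    · ext a
      simp only [Finset.mem_image, Finset.mem_filter, Finset.mem_union, Finset.mem_sdiff,
        Finset.mem_Icc]
      constructor
      · rintro ⟨y, ⟨hy, hny⟩, rfl⟩
        rcases hy with hy | hy
        · obtain ⟨a', ha', rfl⟩ := hy
          rwa [show a' + n - n = a' from by omega]
        · obtain ⟨x, hx, rfl⟩ := hy
          exact absurd hny (by omega)
      · intro ha
        have h1 := Finset.mem_Icc.mp (hA ha)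
        exact ⟨a + n, ⟨Or.inl ⟨a, ha, rfl⟩, by omega⟩, by omega⟩
    · ext x
      simp only [Finset.mem_filter, Finset.mem_Icc]
      constructor
      · rintro ⟨⟨_, hxn⟩, hnot⟩
        by_contra hxB
        exact hnot (Finset.mem_union_right _ (Finset.mem_image.mpr
          ⟨x, Finset.mem_sdiff.mpr ⟨Finset.mem_Icc.mpr ⟨by omega, hxn⟩, hxB⟩, rfl⟩))
      · intro hxB
        have hxn := (Finset.mem_Icc.mp (hB hxB)).2
        refine ⟨⟨by omega, hxn⟩, fun hmem => ?_⟩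
        rcases Finset.mem_union.mp hmem with hy | hy
        · obtain ⟨a, ha, hax⟩ := Finset.mem_image.mp hy
          have := Finset.mem_Icc.mp (hA ha)
          omega
        · obtain ⟨x', hx', hxx⟩ := Finset.mem_image.mp hy
          obtain ⟨hx1, hx2⟩ := Finset.mem_sdiff.mp hx'
          have := Finset.mem_Icc.mp hx1
          have : x' = x := by omega
          subst this
          exact hx2 hxB
  · -- right inverse
    intro S hS
    rw [Finset.mem_powersetCard] at hS
    obtain ⟨hSsub, hScard⟩ := hS
    have hSr : ∀ s ∈ S, s < m + n + 1 := fun s hs => Finset.mem_range.mp (hSsub hs)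
    ext y
    simp only [Finset.mem_union, Finset.mem_image, Finset.mem_filter, Finset.mem_sdiff,
      Finset.mem_Icc]
    constructor
    · rintro (⟨z, ⟨s, ⟨hs, hns⟩, rfl⟩, rfl⟩ | ⟨x, ⟨⟨_, hxn⟩, hxf⟩, rfl⟩)
      · rwa [show s - n + n = s from by omega]
      · by_contra hyS
        exact hxf ⟨⟨Nat.zero_le _, hxn⟩, hyS⟩
    · intro hyS
      have hy := hSr y hyS
      rcases Nat.lt_or_ge n y with h | h
      · exact Or.inl ⟨y - n, ⟨y, ⟨hyS, h⟩, rfl⟩, by omega⟩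
      · refine Or.inr ⟨n - y, ⟨⟨by omega, by omega⟩, fun hmem => hmem.2 ?_⟩, by omega⟩
        rwa [show n - (n - y) = y from by omega]
  · -- weights
    rintro ⟨A, B⟩ hP
    rw [Finset.mem_filter, Finset.mem_product] at hP
    obtain ⟨⟨hA, hB⟩, hcard⟩ := hP
    rw [Finset.mem_powerset] at hA hB
    replace hA : A ⊆ Finset.Icc 1 m := hA
    replace hB : B ⊆ Finset.Icc 0 n := hB
    replace hcard : B.card = A.card + k := hcard
    congr 1
    have hdisj : Disjoint (A.image (· + n)) ((Finset.Icc 0 n \ B).image (fun x => n - x)) := by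
      rw [Finset.disjoint_left]
      rintro y hy hy'
      obtain ⟨a, ha, rfl⟩ := Finset.mem_image.mp hy
      obtain ⟨x, hx, hxy⟩ := Finset.mem_image.mp hy'
      have hxy' : n - x = a + n := hxy
      have := Finset.mem_Icc.mp (hA ha)
      omega
    rw [Finset.sum_union hdisj,
      Finset.sum_image (fun x _ y _ h => by omega : ∀ x ∈ A, ∀ y ∈ A, x + n = y + n → x = y),
      Finset.sum_image (fun x hx y hy h => by
        have hx' := Finset.mem_Icc.mp (Finset.mem_sdiff.mp hx).1
        have hy' := Finset.mem_Icc.mp (Finset.mem_sdiff.mp hy).1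
        omega : ∀ x ∈ Finset.Icc 0 n \ B, ∀ y ∈ Finset.Icc 0 n \ B, n - x = n - y → x = y)]
    have e1 : ∑ a ∈ A, id (a + n) = A.sum id + A.card * n := by
      simp only [id]
      rw [Finset.sum_add_distrib, Finset.sum_const, smul_eq_mul]
    have e2 : (∑ x ∈ Finset.Icc 0 n \ B, id (n - x)) + (∑ x ∈ Finset.Icc 0 n \ B, x)
        = (Finset.Icc 0 n \ B).card * n := by
      rw [← Finset.sum_add_distrib]
      rw [Finset.sum_congr rfl (fun x hx => by
        have := Finset.mem_Icc.mp (Finset.mem_sdiff.mp hx).1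
        show id (n - x) + x = n
        simp only [id]; omega)]
      rw [Finset.sum_const, smul_eq_mul]
    have e3 : (∑ x ∈ Finset.Icc 0 n \ B, x) + B.sum id = ∑ x ∈ Finset.Icc 0 n, x :=
      Finset.sum_sdiff hB
    have e4 : ∑ x ∈ Finset.Icc 0 n, x = ∑ i ∈ Finset.range (n + 1), i := by
      rw [show Finset.Icc 0 n = Finset.range (n + 1) from by ext x; simp [Nat.lt_succ_iff]]
    have hCc : (Finset.Icc 0 n \ B).card + B.card = n + 1 := by
      have hBle : B.card ≤ n + 1 := by
        have := Finset.card_le_card hB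
        rwa [Nat.card_Icc] at this
      rw [Finset.card_sdiff_of_subset hB, Nat.card_Icc]
      omega
    have h6 : (b : ℤ) = A.card + (Finset.Icc 0 n \ B).card := by omega
    have e2' : ((∑ x ∈ Finset.Icc 0 n \ B, id (n - x) : ℕ) : ℤ)
        + (∑ x ∈ Finset.Icc 0 n \ B, x : ℕ) = ((Finset.Icc 0 n \ B).card : ℤ) * n := by
      exact_mod_cast e2
    have e3' : ((∑ x ∈ Finset.Icc 0 n \ B, x : ℕ) : ℤ) + (B.sum id : ℕ)
        = ((∑ i ∈ Finset.range (n + 1), i : ℕ) : ℤ) := by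
      exact_mod_cast e3.trans e4
    have key : ((n * b + (A.sum id + B.sum id) : ℕ) : ℤ)
        = ((∑ i ∈ Finset.range (n + 1), i) + (A.sum id + A.card * n
            + ∑ x ∈ Finset.Icc 0 n \ B, id (n - x)) : ℕ) := by
      push_cast at e2' e3' ⊢
      linear_combination (n : ℤ) * h6 - e2' + e3'
    rw [e1]
    exact_mod_cast key

lemma tri_exp (n b k : ℕ) (hk : 1 ≤ k) (hb : b + k = n + 1) :
    (∑ i ∈ Finset.range (n + 1), i) + (∑ i ∈ Finset.range b, i)
      = n * b + ∑ i ∈ Finset.range k, i := by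
  have h2 : ((∑ i ∈ Finset.range (n + 1), i) * 2) + ((∑ i ∈ Finset.range b, i) * 2)
      = (n * b * 2) + ((∑ i ∈ Finset.range k, i) * 2) := by
    rw [Finset.sum_range_id_mul_two, Finset.sum_range_id_mul_two, Finset.sum_range_id_mul_two]
    obtain ⟨c, rfl⟩ : ∃ c, k = c + 1 := ⟨k - 1, by omega⟩
    obtain rfl : n = b + c := by omega
    simp only [Nat.add_sub_cancel]
    rcases b with _ | b'
    · ring
    · simp only [Nat.add_sub_cancel]
      ring
  omega


/-- The generating function for synchronized partitions in `𝒮_{m,n}` with negative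
discrepancy `-k` (`1 ≤ k ≤ n+1`): pairs `(α,β)` encoded as finsets `A ⊆ [1,m]`,
`B ⊆ [0,n]` with `card B = card A + k`, weighted by `q^{|A|+|B|}`. -/
theorem synchronized_neg_discrepancy_gf (m n k : ℕ) (hk1 : 1 ≤ k) (hk2 : k ≤ n + 1) :
    ∑ P ∈ ((Finset.Icc 1 m).powerset ×ˢ (Finset.Icc 0 n).powerset).filter
        (fun P => P.2.card = P.1.card + k),
      (RatFunc.X : RatFunc ℚ) ^ (P.1.sum id + P.2.sum id) =
      (RatFunc.X : RatFunc ℚ) ^ (k * (k - 1) / 2) * qbinom (m + n + 1) ((n : ℤ) - k + 1) := by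
  obtain ⟨b, hb⟩ : ∃ b, b + k = n + 1 := ⟨n + 1 - k, by omega⟩
  have hG := Gq_eq (m + n + 1) b (by omega)
  rw [show m + n + 1 - b = m + k from by omega] at hG
  rw [qbinom, if_pos (⟨by omega, by push_cast; omega⟩ : (0:ℤ) ≤ (n : ℤ) - k + 1 ∧
    (n : ℤ) - k + 1 ≤ ((m + n + 1 : ℕ) : ℤ))]
  rw [show ((n : ℤ) - k + 1).toNat = b from by omega]
  rw [show m + n + 1 - b = m + k from by omega]
  rw [show k * (k - 1) / 2 = ∑ i ∈ Finset.range k, i from (Finset.sum_range_id k).symm]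
  apply mul_left_cancel₀ (pow_ne_zero (n * b) (RatFunc.X_ne_zero (K := ℚ)))
  rw [sync_bij m n k b hk1 hb]
  apply mul_right_cancel₀ (mul_ne_zero (qPoch_ne_zero b) (qPoch_ne_zero (m + k)))
  have hQ : qPoch (m + n + 1) / (qPoch b * qPoch (m + k)) * (qPoch b * qPoch (m + k))
      = qPoch (m + n + 1) :=
    div_mul_cancel₀ _ (mul_ne_zero (qPoch_ne_zero b) (qPoch_ne_zero (m + k)))
  have hpow : (RatFunc.X : RatFunc ℚ) ^ (∑ i ∈ Finset.range (n + 1), i) *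
        (RatFunc.X : RatFunc ℚ) ^ (∑ i ∈ Finset.range b, i)
      = (RatFunc.X : RatFunc ℚ) ^ (n * b) *
        (RatFunc.X : RatFunc ℚ) ^ (∑ i ∈ Finset.range k, i) := by
    rw [← pow_add, ← pow_add, tri_exp n b k hk1 hb]
  linear_combination (RatFunc.X : RatFunc ℚ) ^ (∑ i ∈ Finset.range (n + 1), i) * hG +
    qPoch (m + n + 1) * hpow -
    (RatFunc.X : RatFunc ℚ) ^ (n * b) * (RatFunc.X : RatFunc ℚ) ^ (∑ i ∈ Finset.range k, i) * hQ
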